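/- Let (X,d) be a Robinson space that is conical with apex p (d(p,x) = δ > 0 for all x ∈ X \ {p}), with δ < diam(X \ {p}), and let <' be a compatible order of (X \ {p}, d) with minimum x_* and maximum x^*. Then a pair (y,z) of consecutive elements of <' (with y <' z) yields a compatible order of (X,d) when p is inserted between y and z if and only if d(x_*, y) ≤ δ, d(z, x^*) ≤ δ and d(y,z) ≥ δ; moreover, such a pair (y,z) exists. -/

import Mathlib

def IsCompatible {X : Type*} (d : X → X → ℝ) (lt : X → X → Prop) : Prop :=
  ∀ x y z : X, lt x y → lt y z → max (d x y) (d y z) ≤ d x z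

/-- Inserting `p` in the hole just after `y` (before the successor of `y`). -/
def insertOrder {X : Type*} (p : X)
    (lt' : {x : X // x ≠ p} → {x : X // x ≠ p} → Prop)
    (y : {x : X // x ≠ p}) : X → X → Prop :=
  fun u v =>
    (∃ hv : v ≠ p, u = p ∧ lt' y ⟨v, hv⟩) ∨
    (∃ hu : u ≠ p, v = p ∧ ¬ lt' y ⟨u, hu⟩) ∨
    (∃ hu : u ≠ p, ∃ hv : v ≠ p, lt' ⟨u, hu⟩ ⟨v, hv⟩)

/-- in a Robinson space which is conical with apex `p` and
`δ < diam(X \ {p})`, given a compatible order `<'` of `X \ {p}` with minimum `x_*`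
and maximum `x^*`, a consecutive pair `(y,z)` of `<'` gives a compatible order of
`(X,d)` after inserting `p` iff `d(x_*,y) ≤ δ`, `d(z,x^*) ≤ δ` and `d(y,z) ≥ δ`;
moreover such a pair exists. -/
theorem admissible_hole_characterization {X : Type*} [Fintype X] (d : X → X → ℝ)
    (hsymm : ∀ x y : X, d x y = d y x)
    (hnonneg : ∀ x y : X, 0 ≤ d x y)
    (hself : ∀ x : X, d x x = 0)
    (hRobinson : ∃ lt : X → X → Prop, IsStrictTotalOrder X lt ∧ IsCompatible d lt)
    (p : X) (δ : ℝ) (hδpos : 0 < δ)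
    (hconical : ∀ x : X, x ≠ p → d p x = δ)
    (hδdiam : δ < ⨆ u : {x : X // x ≠ p}, ⨆ v : {x : X // x ≠ p}, d u.1 v.1)
    (lt' : {x : X // x ≠ p} → {x : X // x ≠ p} → Prop)
    (hsto : IsStrictTotalOrder {x : X // x ≠ p} lt')
    (hcomp : ∀ u v w : {x : X // x ≠ p}, lt' u v → lt' v w →
      max (d u.1 v.1) (d v.1 w.1) ≤ d u.1 w.1)
    (xmin xmax : {x : X // x ≠ p})
    (hmin : ∀ w : {x : X // x ≠ p}, ¬ lt' w xmin)
    (hmax : ∀ w : {x : X // x ≠ p}, ¬ lt' xmax w) :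
    (∀ y z : {x : X // x ≠ p}, lt' y z →
      (∀ w : {x : X // x ≠ p}, ¬ (lt' y w ∧ lt' w z)) →
      (IsCompatible d (insertOrder p lt' y) ↔
        d xmin.1 y.1 ≤ δ ∧ d z.1 xmax.1 ≤ δ ∧ δ ≤ d y.1 z.1)) ∧
    (∃ y z : {x : X // x ≠ p}, lt' y z ∧
      (∀ w : {x : X // x ≠ p}, ¬ (lt' y w ∧ lt' w z)) ∧
      d xmin.1 y.1 ≤ δ ∧ d z.1 xmax.1 ≤ δ ∧ δ ≤ d y.1 z.1) := by
  classical
  obtain ⟨lt, hlt, hcompat⟩ := hRobinson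
  have tri' : ∀ a b : {x : X // x ≠ p}, lt' a b ∨ a = b ∨ lt' b a := by haveI := hsto; exact trichotomous
  have trans' : ∀ {a b c : {x : X // x ≠ p}}, lt' a b → lt' b c → lt' a c :=
    fun h1 h2 => hsto.trans _ _ _ h1 h2
  have irrefl' : ∀ a : {x : X // x ≠ p}, ¬ lt' a a := hsto.irrefl
  have le_min : ∀ w : {x : X // x ≠ p}, xmin = w ∨ lt' xmin w := by
    intro w
    rcases tri' w xmin with h | h | h
    · exact absurd h (hmin w)
    · exact Or.inl h.symm
    · exact Or.inr h
  have le_max : ∀ w : {x : X // x ≠ p}, w = xmax ∨ lt' w xmax := by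
    intro w
    rcases tri' xmax w with h | h | h
    · exact absurd h (hmax w)
    · exact Or.inl h.symm
    · exact Or.inr h
  have nlt : ∀ {a b : {x : X // x ≠ p}}, ¬ lt' a b → (b = a ∨ lt' b a) := by
    intro a b h
    rcases tri' a b with h' | h' | h'
    · exact absurd h' h
    · exact Or.inl h'.symm
    · exact Or.inr h'
  have mono : ∀ a b c e : {x : X // x ≠ p}, (a = b ∨ lt' a b) → (b = c ∨ lt' b c) →
      (c = e ∨ lt' c e) → d b.1 c.1 ≤ d a.1 e.1 := by
    intro a b c e hab hbc hce
    rcases hbc with rfl | hbc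
    · rw [hself]; exact hnonneg _ _
    rcases hab with rfl | hab
    · rcases hce with rfl | hce
      · exact le_rfl
      · exact le_trans (le_max_left _ _) (hcomp a c e hbc hce)
    · rcases hce with rfl | hce
      · exact le_trans (le_max_right _ _) (hcomp a b c hab hbc)
      · exact le_trans (le_trans (le_max_right _ _) (hcomp a b c hab hbc))
          (le_trans (le_max_left _ _) (hcomp a c e (trans' hab hbc) hce))
  constructor
  · intro y z hyz hcons
    have hzle : ∀ w : {x : X // x ≠ p}, lt' y w → (z = w ∨ lt' z w) := by
      intro w hw
      rcases tri' w z with h | h | h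
      · exact absurd ⟨hw, h⟩ (hcons w)
      · exact Or.inl h.symm
      · exact Or.inr h
    constructor
    · intro hC
      refine ⟨?_, ?_, ?_⟩
      · rcases le_min y with h | h
        · rw [← h, hself]; exact hδpos.le
        · have h1 : insertOrder p lt' y xmin.1 y.1 := Or.inr (Or.inr ⟨xmin.2, y.2, h⟩)
          have h2 : insertOrder p lt' y y.1 p := Or.inr (Or.inl ⟨y.2, rfl, irrefl' y⟩)
          have h3 := hC _ _ _ h1 h2
          rw [hsymm xmin.1 p, hconical xmin.1 xmin.2] at h3
          exact le_trans (le_max_left _ _) h3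
      · rcases le_max z with h | h
        · rw [← h, hself]; exact hδpos.le
        · have h1 : insertOrder p lt' y p z.1 := Or.inl ⟨z.2, rfl, hyz⟩
          have h2 : insertOrder p lt' y z.1 xmax.1 := Or.inr (Or.inr ⟨z.2, xmax.2, h⟩)
          have h3 := hC _ _ _ h1 h2
          rw [hconical xmax.1 xmax.2] at h3
          exact le_trans (le_max_right _ _) h3
      · have h1 : insertOrder p lt' y y.1 p := Or.inr (Or.inl ⟨y.2, rfl, irrefl' y⟩)
        have h2 : insertOrder p lt' y p z.1 := Or.inl ⟨z.2, rfl, hyz⟩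
        have h3 := hC _ _ _ h1 h2
        exact le_trans (le_of_eq (hconical z.1 z.2).symm) (le_trans (le_max_right _ _) h3)
    · rintro ⟨h1, h2, h3⟩ u v w huv hvw
      rcases huv with ⟨hv, hup, hyv⟩ | ⟨hu, hvp, hyu⟩ | ⟨hu, hv, huv'⟩
      · rw [hup]
        rcases hvw with ⟨hw, hvp, _⟩ | ⟨hv', hwp, hyv'⟩ | ⟨hv', hw, hvw'⟩
        · exact absurd hvp hv
        · exact absurd hyv hyv'
        · rw [hconical v hv, hconical w hw]
          have hd : d v w ≤ d z.1 xmax.1 :=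
            mono z ⟨v, hv⟩ ⟨w, hw⟩ xmax (hzle _ hyv) (Or.inr hvw') (le_max _)
          exact max_le le_rfl (le_trans hd h2)
      · rw [hvp] at hvw ⊢
        rcases hvw with ⟨hw, _, hyw⟩ | ⟨hv', hwp, _⟩ | ⟨hv', hw, _⟩
        · rw [hsymm u p, hconical u hu, hconical w hw]
          have hd : d y.1 z.1 ≤ d u w :=
            mono ⟨u, hu⟩ y z ⟨w, hw⟩ (nlt hyu) (Or.inr hyz) (hzle _ hyw)
          exact max_le (le_trans h3 hd) (le_trans h3 hd)
        · exact absurd rfl hv'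
        · exact absurd rfl hv'
      · rcases hvw with ⟨hw, hvp, _⟩ | ⟨hv', hwp, hyv'⟩ | ⟨hv', hw, hvw'⟩
        · exact absurd hvp hv
        · rw [hwp, hsymm v p, hconical v hv, hsymm u p, hconical u hu]
          have hd : d u v ≤ d xmin.1 y.1 :=
            mono xmin ⟨u, hu⟩ ⟨v, hv⟩ y (le_min _) (Or.inr huv') (nlt hyv')
          exact max_le (le_trans hd h1) le_rfl
        · exact hcomp ⟨u, hu⟩ ⟨v, hv⟩ ⟨w, hw⟩ huv' hvw'
  · haveI hne : Nonempty {x : X // x ≠ p} := ⟨xmin⟩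
    obtain ⟨a0, ha0⟩ := exists_lt_of_lt_ciSup hδdiam
    obtain ⟨b0, hb0⟩ := exists_lt_of_lt_ciSup ha0
    obtain ⟨a, b, hab, hd⟩ : ∃ a b : {x : X // x ≠ p}, lt' a b ∧ δ < d a.1 b.1 := by
      rcases tri' a0 b0 with h | h | h
      · exact ⟨a0, b0, h, hb0⟩
      · rw [h, hself] at hb0; linarith
      · exact ⟨b0, a0, h, by rw [hsymm]; exact hb0⟩
    have hminmax : δ < d xmin.1 xmax.1 :=
      lt_of_lt_of_le hd (mono xmin a b xmax (le_min a) (Or.inr hab) (le_max b))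
    have triX : ∀ a b : X, lt a b ∨ a = b ∨ lt b a := by haveI := hlt; exact trichotomous
    have asymX : ∀ {a b : X}, lt a b → ¬ lt b a :=
      fun h1 h2 => (hlt.irrefl _) (hlt.trans _ _ _ h1 h2)
    have key_same : ∀ u v : {x : X // x ≠ p}, lt u.1 v.1 → (lt u.1 p ↔ lt v.1 p) →
        d u.1 v.1 ≤ δ := by
      intro u v h hiff
      rcases triX u.1 p with hup | hup | hup
      · have hvp : lt v.1 p := hiff.mp hup
        have h2 := hcompat u.1 v.1 p h hvp
        rw [hsymm u.1 p, hconical u.1 u.2] at h2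
        exact le_trans (le_max_left _ _) h2
      · exact absurd hup u.2
      · have hvp : lt p v.1 := by
          rcases triX v.1 p with h' | h' | h'
          · exact absurd (hiff.mpr h') (asymX hup)
          · exact absurd h' v.2
          · exact h'
        have h2 := hcompat p u.1 v.1 hup h
        rw [hconical v.1 v.2] at h2
        exact le_trans (le_max_right _ _) h2
    have hsame : ∀ u v : {x : X // x ≠ p}, (lt u.1 p ↔ lt v.1 p) → d u.1 v.1 ≤ δ := by
      intro u v hiff
      rcases triX u.1 v.1 with h | h | h
      · exact key_same u v h hiff
      · rw [h, hself]; exact hδpos.le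
      · rw [hsymm]; exact key_same v u h hiff.symm
    have hdiff : ∀ u v : {x : X // x ≠ p}, ¬ (lt u.1 p ↔ lt v.1 p) → δ ≤ d u.1 v.1 := by
      intro u v hiff
      rcases triX u.1 p with hup | hup | hup
      · have hvp : lt p v.1 := by
          rcases triX v.1 p with h' | h' | h'
          · exact absurd (iff_of_true hup h') hiff
          · exact absurd h' v.2
          · exact h'
        have h2 := hcompat u.1 p v.1 hup hvp
        rw [hconical v.1 v.2] at h2
        exact le_trans (le_max_right _ _) h2
      · exact absurd hup u.2
      · have hvp : lt v.1 p := by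
          rcases triX v.1 p with h' | h' | h'
          · exact h'
          · exact absurd h' v.2
          · exact absurd (iff_of_false (asymX hup) (asymX h')) hiff
        have h2 := hcompat v.1 p u.1 hvp hup
        rw [hconical u.1 u.2] at h2
        rw [hsymm u.1 v.1]
        exact le_trans (le_max_right _ _) h2
    have hxdiff : ¬ (lt xmax.1 p ↔ lt xmin.1 p) := by
      intro h
      exact absurd (hsame xmax xmin h) (not_le.mpr (by rwa [hsymm xmax.1 xmin.1]))
    haveI : Fintype {x : X // x ≠ p} := Fintype.ofFinite _
    haveI : DecidableRel lt' := fun a b => Classical.dec _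
    letI : LinearOrder {x : X // x ≠ p} := linearOrderOfSTO lt'
    have hlt_eq : ∀ a b : {x : X // x ≠ p}, a < b ↔ lt' a b := fun a b => Iff.rfl
    set S : Finset {x : X // x ≠ p} :=
      Finset.univ.filter (fun w => lt w.1 p ↔ lt xmin.1 p) with hSdef
    have hSne : S.Nonempty := ⟨xmin, by simp [hSdef]⟩
    set y : {x : X // x ≠ p} := S.max' hSne with hydef
    have hyS : y ∈ S := S.max'_mem hSne
    have hyiff : lt y.1 p ↔ lt xmin.1 p := by
      have := hyS; rw [hSdef, Finset.mem_filter] at this; exact this.2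
    have hyxmax : lt' y xmax := by
      rcases le_max y with h | h
      · exfalso; apply hxdiff; rw [← h]; exact hyiff
      · exact h
    set T : Finset {x : X // x ≠ p} := Finset.univ.filter (fun w => lt' y w) with hTdef
    have hTne : T.Nonempty := ⟨xmax, by simp [hTdef, hyxmax]⟩
    set z : {x : X // x ≠ p} := T.min' hTne with hzdef
    have hzT : z ∈ T := T.min'_mem hTne
    have hyz : lt' y z := by
      have := hzT; rw [hTdef, Finset.mem_filter] at this; exact this.2
    have hcons : ∀ w : {x : X // x ≠ p}, ¬ (lt' y w ∧ lt' w z) := by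
      rintro w ⟨hw1, hw2⟩
      have hwT : w ∈ T := by rw [hTdef, Finset.mem_filter]; exact ⟨Finset.mem_univ _, hw1⟩
      have : z ≤ w := T.min'_le w hwT
      exact absurd ((hlt_eq w z).mpr hw2) (not_lt.mpr this)
    have hzS : z ∉ S := by
      intro hz
      have : z ≤ y := S.le_max' z hz
      exact absurd ((hlt_eq y z).mpr hyz) (not_lt.mpr this)
    have hziff : ¬ (lt z.1 p ↔ lt xmin.1 p) := by
      intro h
      exact hzS (by rw [hSdef, Finset.mem_filter]; exact ⟨Finset.mem_univ _, h⟩)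
    refine ⟨y, z, hyz, hcons, ?_, ?_, ?_⟩
    · rw [hsymm xmin.1 y.1]; exact hsame y xmin hyiff
    · exact hsame z xmax (by tauto)
    · exact hdiff y z (by tauto)
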